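/- Let V be a 4-dimensional real vector space with a nondegenerate symmetric bilinear form g, u ∈ V with g(u,u) = −1 and u♭ = g(u,·). Let λ, λ', Λ be real numbers with 2λ + 2Λ ≠ 0, and set H = λ'/(2λ + 2Λ). Define the derivative data Du(j,k) = H(u♭(j)u♭(k) + g(j,k)) (the value of ∇_j u_k in a generalized Robertson-Walker spacetime) and Dλ(j) = −λ'·u♭(j) (the gradient of λ), and define, by the Leibniz rule, DK_j(k,l) = (5/3)Dλ(j)g(k,l) + (2/3)Dλ(j)u♭(k)u♭(l) + ((2λ+2Λ)/3)(Du(j,k)u♭(l) + u♭(k)Du(j,l)), the derivative datum of the tensor K = ((5λ+2Λ)/3)g + ((2λ+2Λ)/3)u♭⊗u♭. Then the conformal Killing identity holds with associated conformal vector η = Dλ: for all j,k,l ∈ V, DK_j(k,l) + DK_k(l,j) + DK_l(j,k) = Dλ(j)g(k,l) + Dλ(k)g(l,j) + Dλ(l)g(j,k). -/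

import Mathlib

open LinearMap (BilinForm)

/-- The tensor `K = ((5λ+2Λ)/3) g + ((2λ+2Λ)/3) u♭⊗u♭` of eq. (1.9), with derivative datum
built by the Leibniz rule from `∇_j u_k = H(u_j u_k + g_jk)` and `∇_j λ = -λ̇ u_j`
(where `H = λ̇/(2λ+2Λ)`), satisfies the conformal Killing identity with associated
conformal vector `η = ∇λ`. -/
theorem GRW_tensor_is_conformal_killing
    {V : Type*} [AddCommGroup V] [Module ℝ V] [FiniteDimensional ℝ V]
    (hdim : Module.finrank ℝ V = 4)
    (g : BilinForm ℝ V) (hgsymm : g.IsSymm) (hg : g.Nondegenerate)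
    (u : V) (hu : g u u = -1)
    (lam lam' Λ : ℝ) (hΛ : 2*lam + 2*Λ ≠ 0)
    (H : ℝ) (hH : H = lam' / (2*lam + 2*Λ))
    (Du : V → V → ℝ)
    (hDu : ∀ j k, Du j k = H * (g u j * g u k + g j k))
    (Dlam : V → ℝ) (hDlam : ∀ j, Dlam j = -lam' * g u j)
    (DK : V → V → V → ℝ)
    (hDK : ∀ j k l, DK j k l = (5/3) * Dlam j * g k l
      + (2/3) * Dlam j * g u k * g u l
      + ((2*lam + 2*Λ)/3) * (Du j k * g u l + g u k * Du j l)) :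
    ∀ j k l, DK j k l + DK k l j + DK l j k
      = Dlam j * g k l + Dlam k * g l j + Dlam l * g j k := by
  intro j k l
  have hs : ∀ x y : V, g x y = g y x := fun x y => (hgsymm.eq x y).symm ▸ rfl
  simp only [hDK, hDu, hDlam, hH]
  rw [hs k j, hs l j, hs l k]
  have hΛ' : lam + Λ ≠ 0 := fun h => hΛ (by linarith)
  field_simp
  ring
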